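/- Suppose positive real numbers S_n*, S_a*, I*, R*, M* satisfy the endemic steady-state equations of system (2): (b − v_i)N − βI*S_n*/N − ηM*S_n* + λS_a* + δqR* − bS_n* = 0; −σ_sβI*S_a*/N + ηM*S_n* − (λ + v_s + b)S_a* + δpR* = 0; βS_n*/N + σ_sβS_a*/N = r + b; rI* + v_iN + v_sS_a* − (δ + b)R* = 0; ω_o + α_oI* + αS_a*/N − λ_oM* = 0. If (Nηα_o + βλ_o)S_n* > Nλ_o(r + δp + b), then λ_o(λ + v_s + b) > ηαS_n*/N. -/
import Mathlib


set_option maxHeartbeats 1000000 in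
/-- At the endemic steady state of model (2), the inequality
`(Nηα₀ + βλ₀)S_n* > Nλ₀(r + δp + b)` implies `λ₀(λ + v_s + b) > ηαS_n*/N`. -/
theorem endemic_x7_bound
    (b beta r eta lam lamo alpha alphao omegao delta vs N sigmas p q vi : ℝ)
    (hb : 0 < b) (hbeta : 0 < beta) (hr : 0 < r) (heta : 0 < eta)
    (hlam : 0 < lam) (hlamo : 0 < lamo) (halpha : 0 < alpha)
    (halphao : 0 < alphao) (homegao : 0 < omegao) (hdelta : 0 < delta)
    (hvs : 0 < vs) (hN : 0 < N)
    (hsigmas0 : 0 < sigmas) (hsigmas1 : sigmas < 1)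
    (hp0 : 0 ≤ p) (hp1 : p ≤ 1) (hq : q = 1 - p)
    (hvi0 : 0 < vi) (hvib : vi < b)
    (Sn Sa I R M : ℝ)
    (hSn : 0 < Sn) (hSa : 0 < Sa) (hI : 0 < I) (hR : 0 < R) (hM : 0 < M)
    (e1 : (b - vi) * N - beta * I * Sn / N - eta * M * Sn + lam * Sa
      + delta * q * R - b * Sn = 0)
    (e2 : -(sigmas * beta * I * Sa / N) + eta * M * Sn
      - (lam + vs + b) * Sa + delta * p * R = 0)
    (e3 : beta * Sn / N + sigmas * beta * Sa / N = r + b)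
    (e4 : r * I + vi * N + vs * Sa - (delta + b) * R = 0)
    (e5 : omegao + alphao * I + alpha * Sa / N - lamo * M = 0)
    (h : (N * eta * alphao + beta * lamo) * Sn > N * lamo * (r + delta * p + b)) :
    lamo * (lam + vs + b) > eta * alpha * Sn / N := by
  have hN' : (N:ℝ) ≠ 0 := ne_of_gt hN
  have e2' : -(sigmas * beta * I * Sa) + eta * M * Sn * N
      - (lam + vs + b) * Sa * N + delta * p * R * N = 0 := by
    have := e2; field_simp at this; linear_combination this
  have e3' : beta * Sn + sigmas * beta * Sa = (r + b) * N := by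
    have := e3; field_simp at this; linear_combination this
  have e5' : omegao * N + alphao * I * N + alpha * Sa - lamo * M * N = 0 := by
    have := e5; field_simp at this; linear_combination this
  have e3'' : lamo * (beta * Sn) + lamo * (sigmas * beta * Sa) = lamo * ((r + b) * N) := by
    linear_combination lamo * e3'
  have h1 : eta * alphao * Sn * N - lamo * sigmas * beta * Sa > lamo * (delta * p) * N := by
    linarith [h, e3'']
  have hkey := mul_lt_mul_of_pos_right h1 hI
  have E2 : lamo * (lam + vs + b) * Sa * N
      = lamo * (-(sigmas * beta * I * Sa) + eta * M * Sn * N + delta * p * R * N) := by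
    linear_combination -lamo * e2'
  have E5 : eta * Sn * (lamo * M * N)
      = eta * Sn * (omegao * N + alphao * I * N + alpha * Sa) := by
    linear_combination -(eta * Sn) * e5'
  have hpos1 : 0 < eta * Sn * (omegao * N) :=
    mul_pos (mul_pos heta hSn) (mul_pos homegao hN)
  have hnn1 : 0 ≤ lamo * (delta * p * R * N) :=
    mul_nonneg hlamo.le (mul_nonneg (mul_nonneg (mul_nonneg hdelta.le hp0) hR.le) hN.le)
  have hnn2 : 0 ≤ lamo * (delta * p) * N * I :=
    mul_nonneg (mul_nonneg (mul_nonneg hlamo.le (mul_nonneg hdelta.le hp0)) hN.le) hI.le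
  have hfinal : lamo * (lam + vs + b) * (N * Sa) > eta * alpha * Sn * Sa := by
    linarith [E2, E5, hkey, hpos1, hnn1, hnn2]
  rw [gt_iff_lt, div_lt_iff₀ hN]
  exact lt_of_mul_lt_mul_right (by nlinarith [hfinal]) hSa.le
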